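/- arXiv:2002.08874 — 2 statements merged into one kernel-verified Lean document; each statement's English description precedes it below -/
import Mathlib

section
/- Let K be a field and f : RatFunc K. The image of f under the canonical embedding of RatFunc K into the field of formal Laurent series LaurentSeries K lies in the range of the canonical ring embedding of formal power series PowerSeries K into LaurentSeries K if and only if (RatFunc.denom f).eval 0 ≠ 0. (In the paper's words: the fractions of polynomials expressible as formal power series are precisely the rational fractions, i.e., those with nonzero constant coefficient in the denominator.) -/
/-- A fraction of polynomials embeds as a formal power series inside the field of
formal Laurent series iff the constant coefficient of its denominator is nonzero. -/
theorem ratFunc_mem_powerSeries_range_iff (K : Type*) [Field K] (f : RatFunc K) :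
    (f : LaurentSeries K) ∈ Set.range (HahnSeries.ofPowerSeries ℤ K) ↔
      (RatFunc.denom f).eval 0 ≠ 0 := by
  have hd0 : ((f.denom : PowerSeries K) : LaurentSeries K) ≠ 0 := by
    intro h
    exact f.denom_ne_zero (Polynomial.coe_eq_zero_iff.mp (HahnSeries.ofPowerSeries_injective (h.trans (map_zero _).symm)))
  have hmain : (f : LaurentSeries K) * ((f.denom : PowerSeries K) : LaurentSeries K)
      = ((f.num : PowerSeries K) : LaurentSeries K) := by
    have hnd : (f : LaurentSeries K) = ((f.num : PowerSeries K) : LaurentSeries K) /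
        ((f.denom : PowerSeries K) : LaurentSeries K) := by
      rw [RatFunc.coe_coe, RatFunc.coe_coe, ← map_div₀]
      exact congrArg _ (RatFunc.num_div_denom f).symm
    rw [hnd]
    exact div_mul_cancel₀ _ hd0
  constructor
  · rintro ⟨g, hg⟩ h0
    have key : g * (f.denom : PowerSeries K) = (f.num : PowerSeries K) := by
      apply HahnSeries.ofPowerSeries_injective (Γ := ℤ)
      rw [map_mul, hg]
      exact hmain
    have hc := congrArg (PowerSeries.constantCoeff (R := K)) key
    rw [map_mul, Polynomial.constantCoeff_coe, Polynomial.constantCoeff_coe,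
      Polynomial.coeff_zero_eq_eval_zero, Polynomial.coeff_zero_eq_eval_zero, h0,
      mul_zero] at hc
    have hXnum : Polynomial.X ∣ f.num := Polynomial.X_dvd_iff.mpr
      (by rw [Polynomial.coeff_zero_eq_eval_zero, ← hc])
    have hXden : Polynomial.X ∣ f.denom := Polynomial.X_dvd_iff.mpr
      (by rw [Polynomial.coeff_zero_eq_eval_zero, h0])
    exact Polynomial.not_isUnit_X ((f.isCoprime_num_denom).isUnit_of_dvd' hXnum hXden)
  · intro h0
    have hu : IsUnit (f.denom : PowerSeries K) := by
      rw [PowerSeries.isUnit_iff_constantCoeff, Polynomial.constantCoeff_coe,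
        Polynomial.coeff_zero_eq_eval_zero]
      exact h0.isUnit
    obtain ⟨u, hu⟩ := hu
    refine ⟨(f.num : PowerSeries K) * ↑u⁻¹, ?_⟩
    have : (HahnSeries.ofPowerSeries ℤ K) ((f.num : PowerSeries K) * ↑u⁻¹)
        * ((f.denom : PowerSeries K) : LaurentSeries K)
        = (f : LaurentSeries K) * ((f.denom : PowerSeries K) : LaurentSeries K) := by
      rw [hmain, ← map_mul]
      congr 1
      rw [mul_assoc, ← hu, Units.inv_mul, mul_one]
    exact mul_right_cancel₀ hd0 this
end

section
/- Let K be a field, let A be an m × n matrix with entries in RatFunc K, and let b : Fin m → RatFunc K. Consider the affine map f : (Fin n → RatFunc K) → (Fin m → RatFunc K) given by f(p) = A.mulVec p + b. Then all entries of A and of b are rational (i.e., have denominators with nonzero constant coefficient) if and only if for every vector r : Fin n → RatFunc K all of whose entries are rational, all entries of f(r) are rational. (This is the paper's Proposition 9: an affine map f : F(x)ⁿ → F(x)ᵐ is rational iff f(r) ∈ ratioᵐ for all r ∈ ratioⁿ.) -/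
/-- A rational function is *rational* (in the sense of the ring `ratio`) if the
constant coefficient of its denominator in lowest terms is nonzero. -/
def IsRationalFraction {K : Type*} [Field K] (f : RatFunc K) : Prop :=
  (RatFunc.denom f).eval 0 ≠ 0

namespace IsRationalFraction

variable {K : Type*} [Field K]

lemma of_dvd {x y z : RatFunc K} (h : RatFunc.denom z ∣ RatFunc.denom x * RatFunc.denom y)
    (hx : IsRationalFraction x) (hy : IsRationalFraction y) : IsRationalFraction z := by
  obtain ⟨c, hc⟩ := h
  intro h0
  apply mul_ne_zero hx hy
  have := congrArg (Polynomial.eval 0) hc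
  simp only [Polynomial.eval_mul] at this ⊢
  rw [this, h0, zero_mul]

lemma zero : IsRationalFraction (0 : RatFunc K) := by
  simp [IsRationalFraction, RatFunc.denom_zero]

lemma one : IsRationalFraction (1 : RatFunc K) := by
  simp [IsRationalFraction, RatFunc.denom_one]

lemma add {x y : RatFunc K} (hx : IsRationalFraction x) (hy : IsRationalFraction y) :
    IsRationalFraction (x + y) := of_dvd (RatFunc.denom_add_dvd x y) hx hy

lemma mul {x y : RatFunc K} (hx : IsRationalFraction x) (hy : IsRationalFraction y) :
    IsRationalFraction (x * y) := of_dvd (RatFunc.denom_mul_dvd x y) hx hy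

lemma neg {x : RatFunc K} (hx : IsRationalFraction x) : IsRationalFraction (-x) := by
  have : -x = (-1 : RatFunc K) * x := by ring
  rw [this]
  have hm1 : IsRationalFraction (-1 : RatFunc K) := by
    have h : (-1 : RatFunc K) = algebraMap (Polynomial K) (RatFunc K) (-1) := by
      simp only [map_neg, map_one]
    rw [IsRationalFraction, h, RatFunc.denom_algebraMap]
    simp
  exact mul hm1 hx

lemma sum {ι : Type*} (s : Finset ι) (f : ι → RatFunc K)
    (h : ∀ i ∈ s, IsRationalFraction (f i)) : IsRationalFraction (∑ i ∈ s, f i) := by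
  classical
  induction s using Finset.induction with
  | empty => simpa using zero
  | insert _ _ hx ih =>
    rw [Finset.sum_insert hx]
    exact add (h _ (Finset.mem_insert_self _ _))
      (ih fun i hi => h i (Finset.mem_insert_of_mem hi))

end IsRationalFraction

/-- An affine map `p ↦ A.mulVec p + b` over `RatFunc K` has all entries of `A` and
`b` rational iff it maps every vector with rational entries to a vector with
rational entries. -/
theorem affineMap_rational_iff (K : Type*) [Field K] (m n : ℕ)
    (A : Matrix (Fin m) (Fin n) (RatFunc K)) (b : Fin m → RatFunc K) :
    ((∀ i j, IsRationalFraction (A i j)) ∧ ∀ i, IsRationalFraction (b i)) ↔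
      ∀ r : Fin n → RatFunc K, (∀ j, IsRationalFraction (r j)) →
        ∀ i, IsRationalFraction ((A.mulVec r + b) i) := by
  constructor
  · rintro ⟨hA, hb⟩ r hr i
    simp only [Pi.add_apply, Matrix.mulVec, dotProduct]
    exact IsRationalFraction.add
      (IsRationalFraction.sum _ _ fun j _ => (hA i j).mul (hr j)) (hb i)
  · intro h
    have hb : ∀ i, IsRationalFraction (b i) := by
      have := h 0 (fun j => IsRationalFraction.zero)
      simpa [Matrix.mulVec_zero] using this
    refine ⟨fun i j => ?_, hb⟩
    have hsingle : ∀ k, IsRationalFraction ((Pi.single j 1 : Fin n → RatFunc K) k) := by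
      intro k
      rcases eq_or_ne k j with rfl | hk
      · simpa using IsRationalFraction.one
      · simp [Pi.single_eq_of_ne hk]
        exact IsRationalFraction.zero
    have h1 := h (Pi.single j 1) hsingle i
    have hmv : (A.mulVec (Pi.single j 1) + b) i = A i j + b i := by
      simp [Matrix.mulVec_single]
    rw [hmv] at h1
    have := h1.add (hb i).neg
    simpa using this
end
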